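/- Let P ⊂ ℝ^l be a convex body, I ⊂ ℝ a closed segment, and μ : I → {compact convex subsets of ℝ^l} a map such that (μ(t_1) + μ(t_2))/2 ⊆ μ((t_1+t_2)/2) for all t_1, t_2 ∈ I, where + is Minkowski sum, and such that the total set is closed. Then the set P_μ := ⋃_{t∈I} μ(t) × {t} ⊂ ℝ^{l+1} is convex. -/

import Mathlib

open Pointwise

/-- A closed subset of ℝ containing `0` and `1` and closed under midpoints
contains `Icc 0 1`. -/
lemma icc_subset_of_midpoint_closed (T : Set ℝ) (hT : IsClosed T)
    (h0 : (0 : ℝ) ∈ T) (h1 : (1 : ℝ) ∈ T)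
    (hmid : ∀ x ∈ T, ∀ y ∈ T, (x + y) / 2 ∈ T) :
    Set.Icc (0 : ℝ) 1 ⊆ T := by
  have dyadic : ∀ n : ℕ, ∀ k : ℕ, k ≤ 2 ^ n → ((k : ℝ) / 2 ^ n) ∈ T := by
    intro n
    induction n with
    | zero =>
      intro k hk
      interval_cases k
      · simpa using h0
      · simpa using h1
    | succ n ih =>
      intro k hk
      rcases Nat.even_or_odd k with ⟨m, hm⟩ | ⟨m, hm⟩
      · subst hm
        have hm2 : m ≤ 2 ^ n := by
          rw [pow_succ] at hk; omega
        have := ih m hm2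
        have heq : ((m + m : ℕ) : ℝ) / 2 ^ (n + 1) = (m : ℝ) / 2 ^ n := by
          push_cast
          ring
        rwa [heq]
      · subst hm
        have hm2 : m + 1 ≤ 2 ^ n := by
          rw [pow_succ] at hk; omega
        have h1' := ih m (by omega)
        have h2' := ih (m + 1) hm2
        have := hmid _ h1' _ h2'
        have heq : ((2 * m + 1 : ℕ) : ℝ) / 2 ^ (n + 1)
            = ((m : ℝ) / 2 ^ n + ((m + 1 : ℕ) : ℝ) / 2 ^ n) / 2 := by
          push_cast
          ring
        rwa [heq]
  intro x hx
  obtain ⟨hx0, hx1⟩ := hx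
  have hseq : Filter.Tendsto (fun n : ℕ => (⌊x * 2 ^ n⌋₊ : ℝ) / 2 ^ n)
      Filter.atTop (nhds x) := by
    have hup : ∀ n : ℕ, (⌊x * 2 ^ n⌋₊ : ℝ) / 2 ^ n ≤ x := by
      intro n
      rw [div_le_iff₀ (by positivity)]
      exact Nat.floor_le (by positivity)
    have hlow : ∀ n : ℕ, x - 1 / 2 ^ n ≤ (⌊x * 2 ^ n⌋₊ : ℝ) / 2 ^ n := by
      intro n
      rw [sub_le_iff_le_add, ← add_div, le_div_iff₀ (by positivity)]
      have := Nat.lt_floor_add_one (x * 2 ^ n)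
      linarith
    have h1 : Filter.Tendsto (fun n : ℕ => x - 1 / 2 ^ n) Filter.atTop (nhds x) := by
      have : Filter.Tendsto (fun n : ℕ => (1 : ℝ) / 2 ^ n) Filter.atTop (nhds 0) := by
        simpa [one_div, Function.comp_def] using
          tendsto_inv_atTop_zero.comp
            (tendsto_pow_atTop_atTop_of_one_lt (by norm_num : (1 : ℝ) < 2))
      simpa using (tendsto_const_nhds.sub this)
    exact tendsto_of_tendsto_of_tendsto_of_le_of_le h1 tendsto_const_nhds
      (fun n => hlow n) (fun n => hup n)
  refine hT.mem_of_tendsto hseq (Filter.Eventually.of_forall fun n => ?_)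
  apply dyadic n
  have : x * 2 ^ n ≤ 2 ^ n := by
    nlinarith [pow_pos (by norm_num : (0:ℝ) < 2) n]
  exact_mod_cast Nat.floor_le_of_le (by exact_mod_cast this)

theorem convex_of_midpoint_fibered (l : ℕ) (P : Set (Fin l → ℝ))
    (hPconv : Convex ℝ P) (hPcomp : IsCompact P) (hPne : P.Nonempty)
    (a b : ℝ) (hab : a ≤ b)
    (mu : ℝ → Set (Fin l → ℝ))
    (hconv : ∀ t ∈ Set.Icc a b, Convex ℝ (mu t))
    (hcomp : ∀ t ∈ Set.Icc a b, IsCompact (mu t))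
    (hmid : ∀ t₁ ∈ Set.Icc a b, ∀ t₂ ∈ Set.Icc a b,
      (2⁻¹ : ℝ) • mu t₁ + (2⁻¹ : ℝ) • mu t₂ ⊆ mu ((t₁ + t₂) / 2))
    (hclosed : IsClosed {q : (Fin l → ℝ) × ℝ | q.2 ∈ Set.Icc a b ∧ q.1 ∈ mu q.2}) :
    Convex ℝ {q : (Fin l → ℝ) × ℝ | q.2 ∈ Set.Icc a b ∧ q.1 ∈ mu q.2} := by
  set S := {q : (Fin l → ℝ) × ℝ | q.2 ∈ Set.Icc a b ∧ q.1 ∈ mu q.2} with hS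
  -- S is midpoint closed
  have hSmid : ∀ p ∈ S, ∀ p' ∈ S, (2⁻¹ : ℝ) • p + (2⁻¹ : ℝ) • p' ∈ S := by
    rintro ⟨x₁, t₁⟩ ⟨ht₁, hx₁⟩ ⟨x₂, t₂⟩ ⟨ht₂, hx₂⟩
    constructor
    · show (2⁻¹ : ℝ) * t₁ + 2⁻¹ * t₂ ∈ Set.Icc a b
      constructor
      · obtain ⟨h1, _⟩ := ht₁; obtain ⟨h2, _⟩ := ht₂; linarith
      · obtain ⟨_, h1⟩ := ht₁; obtain ⟨_, h2⟩ := ht₂; linarith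
    · have hmem : (2⁻¹ : ℝ) • x₁ + (2⁻¹ : ℝ) • x₂ ∈
          (2⁻¹ : ℝ) • mu t₁ + (2⁻¹ : ℝ) • mu t₂ :=
        Set.add_mem_add (Set.smul_mem_smul_set hx₁) (Set.smul_mem_smul_set hx₂)
      have := hmid t₁ ht₁ t₂ ht₂ hmem
      have heq : (t₁ + t₂) / 2 = (2⁻¹ : ℝ) * t₁ + 2⁻¹ * t₂ := by ring
      rwa [heq] at this
  intro q₁ hq₁ q₂ hq₂ α β hα hβ hαβ
  -- the set of parameters s with s • q₁ + (1 - s) • q₂ ∈ S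
  set T := {s : ℝ | s • q₁ + (1 - s) • q₂ ∈ S} with hT
  have hTclosed : IsClosed T := by
    have hcont : Continuous fun s : ℝ => s • q₁ + (1 - s) • q₂ :=
      (continuous_id.smul continuous_const).add
        ((continuous_const.sub continuous_id).smul continuous_const)
    exact hclosed.preimage hcont
  have h0T : (0 : ℝ) ∈ T := by simp [T, hq₂]
  have h1T : (1 : ℝ) ∈ T := by simp [T, hq₁]
  have hTmid : ∀ x ∈ T, ∀ y ∈ T, (x + y) / 2 ∈ T := by
    intro x hx y hy
    have := hSmid _ hx _ hy
    have heq : (2⁻¹ : ℝ) • (x • q₁ + (1 - x) • q₂) + (2⁻¹ : ℝ) • (y • q₁ + (1 - y) • q₂)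
        = ((x + y) / 2) • q₁ + (1 - (x + y) / 2) • q₂ := by
      module
    rwa [heq] at this
  have hmem : α ∈ Set.Icc (0 : ℝ) 1 := ⟨hα, by linarith⟩
  have := icc_subset_of_midpoint_closed T hTclosed h0T h1T hTmid hmem
  have hβeq : β = 1 - α := by linarith
  rw [hβeq]
  exact this
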